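/- Let k be a field and S = k[x₁, …, xₙ]. Let M be a matroid on {1, …, n} with base family 𝓑 having at least one pair of adjacent bases, and let I ⊆ S be the matroidal ideal generated by the squarefree monomials x_B = ∏_{i ∈ B} x_i for B ∈ 𝓑. Then the adjacency ideal A(I), generated by the least common multiples lcm(x_B, x_C) over all adjacent pairs B, C ∈ 𝓑, is again a matroidal ideal: there exists a matroid M' on {1, …, n} with base family 𝓑' such that A(I) is the ideal generated by { x_D : D ∈ 𝓑' }. -/

import Mathlib

open Set

/-- Two sets are *adjacent* if each has exactly one element outside the other. -/
def AdjacentSets {α : Type*} (B C : Set α) : Prop :=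
  (B \ C).ncard = 1 ∧ (C \ B).ncard = 1

/-- The squarefree monomial `x_B = ∏_{i ∈ B} x_i` in `k[x₁, …, xₙ]` associated to a
subset `B ⊆ {1, …, n}`. -/
noncomputable def baseMonomial (k : Type*) [CommSemiring k] {n : ℕ} (B : Set (Fin n)) :
    MvPolynomial (Fin n) k :=
  ∏ i ∈ B.toFinite.toFinset, MvPolynomial.X i

/-- Auxiliary predicate: `D` has one more element than a base and every element of `D`
lies in a base contained in `D`. -/
def AdjQ {n : ℕ} (M : Matroid (Fin n)) (D : Set (Fin n)) : Prop :=
  (∃ B, M.IsBase B ∧ B ⊆ D ∧ D.ncard = B.ncard + 1) ∧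
    ∀ x ∈ D, ∃ B, M.IsBase B ∧ x ∈ B ∧ B ⊆ D

namespace AdjQ

variable {n : ℕ} {M : Matroid (Fin n)}

lemma insert_base (hE : M.E = Set.univ) {C : Set (Fin n)} {y : Fin n}
    (hC : M.IsBase C) (hy : M.Indep {y}) (hyC : y ∉ C) : AdjQ M (insert y C) := by
  constructor
  · exact ⟨C, hC, subset_insert _ _, Set.ncard_insert_of_notMem hyC C.toFinite⟩
  · intro x hx
    rcases hx with rfl | hxC
    · obtain ⟨I, hI, hyI⟩ := hy.subset_isBasis_of_subset
        (singleton_subset_iff.2 (mem_insert x C)) (by rw [hE]; exact subset_univ _)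
      exact ⟨I, hC.isBase_of_isBasis_superset (subset_insert _ _) hI,
        hyI rfl, hI.subset⟩
    · exact ⟨C, hC, hxC, subset_insert _ _⟩

/-- `AdjQ` is equivalent to being a union of two adjacent bases. -/
lemma iff_pair (hE : M.E = Set.univ) (D : Set (Fin n)) :
    (∃ B C, M.IsBase B ∧ M.IsBase C ∧ AdjacentSets B C ∧ D = B ∪ C) ↔ AdjQ M D := by
  constructor
  · rintro ⟨B, C, hB, hC, ⟨-, hCB⟩, rfl⟩
    obtain ⟨c, hc⟩ := Set.ncard_eq_one.1 hCB
    have hcB : c ∉ B ∧ c ∈ C := by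
      have : c ∈ C \ B := hc ▸ rfl; exact ⟨this.2, this.1⟩
    have hunion : B ∪ C = insert c B := by
      rw [Set.union_comm, Set.union_eq_diff_union_diff_union_inter, hc]
      ext x
      simp only [Set.mem_union, Set.mem_insert_iff, Set.mem_diff, Set.mem_inter_iff,
        Set.mem_singleton_iff]
      tauto
    constructor
    · refine ⟨B, hB, subset_union_left, ?_⟩
      rw [hunion, Set.ncard_insert_of_notMem hcB.1 B.toFinite]
    · intro x hx
      rcases hx with hx | hx
      · exact ⟨B, hB, hx, subset_union_left⟩
      · exact ⟨C, hC, hx, subset_union_right⟩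
  · rintro ⟨⟨B, hB, hBD, hcard⟩, hall⟩
    have hdiff : (D \ B).ncard = 1 := by
      rw [Set.ncard_diff hBD B.toFinite, hcard]; omega
    obtain ⟨y, hy⟩ := Set.ncard_eq_one.1 hdiff
    have hyD : y ∈ D ∧ y ∉ B := by
      have : y ∈ D \ B := hy ▸ rfl; exact ⟨this.1, this.2⟩
    obtain ⟨C, hC, hyC, hCD⟩ := hall y hyD.1
    have hDeq : D = B ∪ {y} := by
      ext x
      constructor
      · intro hx
        by_cases hxB : x ∈ B
        · exact Or.inl hxB
        · right; rw [← hy]; exact ⟨hx, hxB⟩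
      · rintro (hx | rfl)
        · exact hBD hx
        · exact hyD.1
    have hCBdiff : C \ B = {y} := by
      apply Set.Subset.antisymm
      · intro x hx
        have : x ∈ D \ B := ⟨hCD hx.1, hx.2⟩
        rw [hy] at this; exact this
      · intro x hx; rw [Set.mem_singleton_iff] at hx; subst hx; exact ⟨hyC, hyD.2⟩
    have hCB1 : (C \ B).ncard = 1 := by rw [hCBdiff]; simp
    refine ⟨B, C, hB, hC, ⟨?_, hCB1⟩, ?_⟩
    · rw [hB.ncard_diff_comm hC]; exact hCB1
    · apply Set.Subset.antisymm
      · rw [hDeq]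
        apply Set.union_subset_union_right
        rw [Set.singleton_subset_iff]; exact hyC
      · exact Set.union_subset hBD hCD

lemma exchange (hE : M.E = Set.univ) {D₁ D₂ : Set (Fin n)} (h₁ : AdjQ M D₁)
    (h₂ : AdjQ M D₂) {e : Fin n} (he : e ∈ D₁ \ D₂) :
    ∃ f ∈ D₂ \ D₁, AdjQ M (insert f (D₁ \ {e})) := by
  obtain ⟨⟨B₀, hB₀, hB₀D, hcard₁⟩, hall₁⟩ := h₁
  obtain ⟨⟨B₂, hB₂, hB₂D, hcard₂⟩, hall₂⟩ := h₂
  have hcards : D₁.ncard = D₂.ncard := by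
    rw [hcard₁, hcard₂, hB₀.ncard_eq_ncard_of_isBase hB₂]
  -- D₂ \ D₁ is nonempty
  have hne : ∃ f, f ∈ D₂ \ D₁ := by
    by_contra h
    push_neg at h
    have hsub : D₂ ⊆ D₁ := fun x hx => by
      by_contra hx'; exact h x ⟨hx, hx'⟩
    have : D₂ = D₁ := Set.eq_of_subset_of_ncard_le hsub hcards.le D₁.toFinite
    rw [← this] at he
    exact he.2 he.1
  by_cases hcase : ∃ B, M.IsBase B ∧ B ⊆ D₁ \ {e}
  · -- D₁ \ {e} is itself a base
    obtain ⟨B, hB, hBsub⟩ := hcase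
    have heq : B = D₁ \ {e} := by
      refine Set.eq_of_subset_of_ncard_le hBsub ?_ (D₁.toFinite.diff)
      rw [Set.ncard_diff_singleton_of_mem he.1, hcard₁,
        hB₀.ncard_eq_ncard_of_isBase hB]
      omega
    obtain ⟨f, hf⟩ := hne
    obtain ⟨Bf, hBf, hfBf, -⟩ := hall₂ f hf.1
    have hyf : M.Indep {f} := hBf.indep.subset (Set.singleton_subset_iff.2 hfBf)
    have hfB : f ∉ B := fun h => hf.2 (heq ▸ h).1
    refine ⟨f, hf, ?_⟩
    rw [← heq]
    exact insert_base hE hB hyf hfB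
  · -- every base inside D₁ contains e; find f outside the closure of D₁ \ {e}
    obtain ⟨B₁, hB₁, heB₁, hB₁D⟩ := hall₁ e he.1
    have hIe : M.Indep (B₁ \ {e}) := hB₁.indep.subset diff_subset
    -- there is f ∈ D₂ outside closure (D₁ \ {e})
    have hfex : ∃ f ∈ D₂, f ∉ M.closure (D₁ \ {e}) := by
      by_contra h
      push_neg at h
      have hB₂cl : B₂ ⊆ M.closure (D₁ \ {e}) := fun x hx => h x (hB₂D hx)
      have hclcl : M.closure B₂ ⊆ M.closure (D₁ \ {e}) := by
        calc M.closure B₂ ⊆ M.closure (M.closure (D₁ \ {e})) := M.closure_mono hB₂cl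
          _ = M.closure (D₁ \ {e}) := M.closure_closure _
      rw [hB₂.closure_eq] at hclcl
      have hsp : M.Spanning (D₁ \ {e}) := by
        rw [Matroid.spanning_iff_closure_eq (by rw [hE]; exact subset_univ _)]
        exact Set.Subset.antisymm (M.closure_subset_ground _) hclcl
      obtain ⟨B, hB, hBsub⟩ := hsp.exists_isBase_subset
      exact hcase ⟨B, hB, hBsub⟩
    obtain ⟨f, hfD₂, hfcl⟩ := hfex
    have hfD₁ : f ∉ D₁ := by
      intro hfd
      have hfe : f ≠ e := fun h => he.2 (h ▸ hfD₂)
      exact hfcl (M.subset_closure _ (by rw [hE]; exact subset_univ _) ⟨hfd, hfe⟩)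
    have hfIcl : f ∉ M.closure (B₁ \ {e}) := fun h =>
      hfcl (M.closure_mono (Set.diff_subset_diff_left hB₁D) h)
    have hfI : f ∉ B₁ \ {e} := fun h => hfD₁ (hB₁D h.1)
    have hind : M.Indep (insert f (B₁ \ {e})) := by
      rw [hIe.insert_indep_iff_of_notMem hfI]
      exact ⟨by rw [hE]; exact mem_univ _, hfIcl⟩
    -- insert f (B₁ \ {e}) is a base
    have hC' : M.IsBase (insert f (B₁ \ {e})) := by
      obtain ⟨B', hB', hsub⟩ := hind.exists_isBase_superset
      have hle : B'.ncard ≤ (insert f (B₁ \ {e})).ncard := by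
        rw [Set.ncard_insert_of_notMem hfI ((B₁.toFinite).diff),
          Set.ncard_diff_singleton_of_mem heB₁,
          hB'.ncard_eq_ncard_of_isBase hB₁]
        have : 0 < B₁.ncard := (Set.ncard_pos B₁.toFinite).2 ⟨e, heB₁⟩
        omega
      rw [Set.eq_of_subset_of_ncard_le hsub hle B'.toFinite]
      exact hB'
    -- the element of D₁ \ B₁
    have hdiff : (D₁ \ B₁).ncard = 1 := by
      rw [Set.ncard_diff hB₁D B₁.toFinite, hcard₁, hB₀.ncard_eq_ncard_of_isBase hB₁]
      omega
    obtain ⟨c, hc⟩ := Set.ncard_eq_one.1 hdiff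
    have hcD : c ∈ D₁ ∧ c ∉ B₁ := by
      have : c ∈ D₁ \ B₁ := hc ▸ rfl; exact ⟨this.1, this.2⟩
    obtain ⟨C₁, hC₁, hcC₁, -⟩ := hall₁ c hcD.1
    have hcind : M.Indep {c} := hC₁.indep.subset (Set.singleton_subset_iff.2 hcC₁)
    have hcne : c ≠ f := fun h => hfD₁ (h ▸ hcD.1)
    have hcnotC' : c ∉ insert f (B₁ \ {e}) := by
      rintro (h | h)
      · exact hcne h
      · exact hcD.2 h.1
    have hseteq : insert f (D₁ \ {e}) = insert c (insert f (B₁ \ {e})) := by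
      have hD₁eq : D₁ = B₁ ∪ {c} := by
        ext x
        constructor
        · intro hx
          by_cases hxB : x ∈ B₁
          · exact Or.inl hxB
          · right; rw [← hc]; exact ⟨hx, hxB⟩
        · rintro (hx | rfl)
          · exact hB₁D hx
          · exact hcD.1
      have hce : c ≠ e := fun h => hcD.2 (h ▸ heB₁)
      rw [hD₁eq]
      ext x
      simp only [Set.mem_insert_iff, Set.mem_diff, Set.mem_union, Set.mem_singleton_iff]
      constructor
      · rintro (rfl | ⟨hx | rfl, hxe⟩)
        · exact Or.inr (Or.inl rfl)
        · exact Or.inr (Or.inr ⟨hx, hxe⟩)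
        · exact Or.inl rfl
      · rintro (rfl | rfl | ⟨hx, hxe⟩)
        · exact Or.inr ⟨Or.inr rfl, hce⟩
        · exact Or.inl rfl
        · exact Or.inr ⟨Or.inl hx, hxe⟩
    refine ⟨f, ⟨hfD₂, hfD₁⟩, ?_⟩
    rw [hseteq]
    exact insert_base hE hC' hcind hcnotC'

end AdjQ

/-- Let `k` be a field and `S = k[x₁, …, xₙ]`.  Let `M` be a matroid on
`{1, …, n}` with base family `𝓑` having at least one pair of adjacent bases, and let
`I ⊆ S` be the matroidal ideal generated by the squarefree monomials `x_B`, `B ∈ 𝓑`.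
Then the adjacency ideal `A(I)`, generated by the least common multiples
`lcm(x_B, x_C) = x_{B ∪ C}` over all adjacent pairs `B, C ∈ 𝓑`, is again a matroidal
ideal: there is a matroid `M'` on `{1, …, n}` with base family `𝓑'` such that `A(I)` is
the ideal generated by `{ x_D : D ∈ 𝓑' }`. -/
theorem adjacency_ideal_matroidal (k : Type*) [Field k] {n : ℕ}
    (M : Matroid (Fin n)) (hE : M.E = Set.univ)
    (𝓑 : Set (Set (Fin n))) (h𝓑 : 𝓑 = {B | M.IsBase B})
    (hadj : ∃ B ∈ 𝓑, ∃ C ∈ 𝓑, AdjacentSets B C)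
    (I : Ideal (MvPolynomial (Fin n) k))
    (hI : I = Ideal.span {p | ∃ B ∈ 𝓑, p = baseMonomial k B})
    (A : Ideal (MvPolynomial (Fin n) k))
    (hA : A = Ideal.span
      {p | ∃ B ∈ 𝓑, ∃ C ∈ 𝓑, AdjacentSets B C ∧ p = baseMonomial k (B ∪ C)}) :
    ∃ M' : Matroid (Fin n), M'.E = Set.univ ∧
      A = Ideal.span {p | ∃ D ∈ {B | M'.IsBase B}, p = baseMonomial k D} := by
  subst h𝓑
  set P : Set (Fin n) → Prop :=
    fun D => ∃ B C, M.IsBase B ∧ M.IsBase C ∧ AdjacentSets B C ∧ D = B ∪ C with hP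
  have hexists : ∃ D, P D := by
    obtain ⟨B, hB, C, hC, hBC⟩ := hadj
    exact ⟨B ∪ C, B, C, hB, hC, hBC, rfl⟩
  have hexch : Matroid.ExchangeProperty P := by
    intro D₁ D₂ h₁ h₂ e he
    have q₁ : AdjQ M D₁ := (AdjQ.iff_pair hE D₁).1 h₁
    have q₂ : AdjQ M D₂ := (AdjQ.iff_pair hE D₂).1 h₂
    obtain ⟨f, hf, hq⟩ := AdjQ.exchange hE q₁ q₂ he
    exact ⟨f, hf, (AdjQ.iff_pair hE _).2 hq⟩
  refine ⟨Matroid.ofIsBaseOfFinite Set.finite_univ P hexists hexch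
    (fun B _ => Set.subset_univ B), rfl, ?_⟩
  rw [hA]
  congr 1
  ext p
  simp only [Set.mem_setOf_eq, Matroid.ofIsBaseOfFinite_isBase]
  constructor
  · rintro ⟨B, hB, C, hC, hBC, rfl⟩
    exact ⟨B ∪ C, ⟨B, C, hB, hC, hBC, rfl⟩, rfl⟩
  · rintro ⟨D, ⟨B, C, hB, hC, hBC, rfl⟩, rfl⟩
    exact ⟨B, hB, C, hC, hBC, rfl⟩
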